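/- Let 0 < s < 1 and x > 0. Then the function t ↦ x^{it} / sin(π(s - i t)) is integrable on ℝ and ∫_ℝ x^{it} / sin(π(s - i t)) dt = 2 x^s / (1 + x). -/

import Mathlib

open MeasureTheory

namespace CpowDivSinAux

open Set Real Complex
open scoped Real

lemma re_sin_add_mul_I (a b : ℝ) :
    (Complex.sin (↑a + ↑b * Complex.I)).re = Real.sin a * Real.cosh b := by
  rw [Complex.sin_add_mul_I]
  simp [← Complex.ofReal_sin, ← Complex.ofReal_cos, ← Complex.ofReal_cosh,
    ← Complex.ofReal_sinh, ← Complex.ofReal_mul]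

lemma norm_sin_lower (a b : ℝ) :
    |Real.sin a| * Real.cosh b ≤ ‖Complex.sin (↑a + ↑b * Complex.I)‖ := by
  have h := Complex.abs_re_le_norm (Complex.sin (↑a + ↑b * Complex.I))
  rw [re_sin_add_mul_I, abs_mul, abs_of_pos (Real.cosh_pos b)] at h
  exact h

lemma integrable_exp_neg_pi_abs : Integrable (fun t : ℝ => Real.exp (-(π * |t|))) := by
  have h1 : IntegrableOn (fun t : ℝ => Real.exp (-(π * |t|))) (Ioi 0) := by
    refine ((exp_neg_integrableOn_Ioi 0 Real.pi_pos).congr_fun ?_ measurableSet_Ioi)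
    intro t ht
    simp only []
    rw [abs_of_pos ht, neg_mul]
  rw [← integrableOn_univ, ← Iic_union_Ioi (a := (0:ℝ)), integrableOn_union]
  refine ⟨?_, h1⟩
  have h2 : IntegrableOn (fun t : ℝ => Real.exp (-(π * |t|))) (Ici 0) :=
    (integrableOn_Ici_iff_integrableOn_Ioi).mpr h1
  rw [← (Measure.measurePreserving_neg (volume : Measure ℝ)).integrableOn_comp_preimage
      (Homeomorph.neg ℝ).measurableEmbedding]
  simpa [Function.comp_def, abs_neg] using h2

lemma sin_pi_s_pos {s : ℝ} (hs0 : 0 < s) (hs1 : s < 1) : 0 < Real.sin (π * s) :=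
  Real.sin_pos_of_pos_of_lt_pi (by positivity)
    (by nlinarith [Real.pi_pos])

lemma norm_inv_sin_le {s : ℝ} (hs0 : 0 < s) (hs1 : s < 1) (b : ℝ) :
    ‖(Complex.sin (↑(π * s) + ↑b * Complex.I))⁻¹‖ ≤
      2 / Real.sin (π * s) * Real.exp (-|b|) := by
  have hsin := sin_pi_s_pos hs0 hs1
  have hcosh : Real.exp |b| / 2 ≤ Real.cosh b := by
    rw [Real.cosh_eq]
    have := Real.exp_abs_le b
    linarith
  have hlow : Real.sin (π * s) * (Real.exp |b| / 2) ≤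
      ‖Complex.sin (↑(π * s) + ↑b * Complex.I)‖ := by
    calc Real.sin (π * s) * (Real.exp |b| / 2)
        ≤ Real.sin (π * s) * Real.cosh b := by
          exact mul_le_mul_of_nonneg_left hcosh hsin.le
      _ = |Real.sin (π * s)| * Real.cosh b := by rw [abs_of_pos hsin]
      _ ≤ _ := norm_sin_lower _ _
  have hpos : 0 < Real.sin (π * s) * (Real.exp |b| / 2) := by positivity
  rw [norm_inv]
  calc ‖Complex.sin (↑(π * s) + ↑b * Complex.I)‖⁻¹
      ≤ (Real.sin (π * s) * (Real.exp |b| / 2))⁻¹ := by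
        exact inv_anti₀ hpos hlow
    _ = 2 / Real.sin (π * s) * Real.exp (-|b|) := by
        rw [Real.exp_neg]; field_simp

lemma phi_image : (fun u : ℝ => u / (1 + u)) '' Ioi 0 = Ioo 0 1 := by
  ext y
  constructor
  · rintro ⟨u, hu, rfl⟩
    have hu' : (0:ℝ) < u := hu
    have h1u : (0:ℝ) < 1 + u := by linarith
    constructor
    · positivity
    · rw [div_lt_one h1u]; linarith
  · intro hy
    refine ⟨y / (1 - y), ?_, ?_⟩
    · have := hy.1; have := hy.2
      exact div_pos hy.1 (by linarith)
    · have h1 : (1:ℝ) - y ≠ 0 := by have := hy.2; intro h; nlinarith [hy.2]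
      field_simp
      ring

lemma phi_inj : InjOn (fun u : ℝ => u / (1 + u)) (Ioi 0) := by
  intro a ha b hb h
  simp only at h
  have h1a : (1:ℝ) + a ≠ 0 := by have : (0:ℝ) < a := ha; intro hc; linarith
  have h1b : (1:ℝ) + b ≠ 0 := by have : (0:ℝ) < b := hb; intro hc; linarith
  field_simp at h
  linarith

lemma phi_deriv : ∀ u ∈ Ioi (0:ℝ),
    HasDerivWithinAt (fun u : ℝ => u / (1 + u)) (((1 + u) ^ 2)⁻¹) (Ioi 0) u := by
  intro u hu
  have h1u : (1:ℝ) + u ≠ 0 := by have : (0:ℝ) < u := hu; intro hc; linarith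
  have h : HasDerivAt (fun u : ℝ => u / (1 + u))
      ((1 * (1 + u) - u * 1) / (1 + u) ^ 2) u :=
    (hasDerivAt_id u).div ((hasDerivAt_id u).const_add 1) h1u
  refine h.hasDerivWithinAt.congr_deriv ?_
  ring

/-- The integrand identity after the change of variables `u ↦ u / (1 + u)`. -/
lemma integrand_eq (z : ℂ) (u : ℝ) (hu : u ∈ Ioi (0:ℝ)) :
    |((1 + u) ^ 2)⁻¹| •
      ((((u / (1 + u) : ℝ)) : ℂ) ^ (z - 1) * ((1 : ℂ) - ((u / (1 + u) : ℝ) : ℂ)) ^ (-z)) =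
      (u : ℂ) ^ (z - 1) * ((1 : ℂ) + (u : ℂ))⁻¹ := by
  have hu' : (0:ℝ) < u := hu
  have h1u : (0:ℝ) < 1 + u := by linarith
  have h1u' : ((1:ℂ) + u) ≠ 0 := by
    have : ((1 + u : ℝ) : ℂ) ≠ 0 := Complex.ofReal_ne_zero.mpr h1u.ne'
    push_cast at this; exact this
  have harg : (((1 + u : ℝ)) : ℂ).arg ≠ π := by
    rw [Complex.arg_ofReal_of_nonneg h1u.le]
    exact Real.pi_ne_zero.symm
  have hinv : ∀ w : ℂ, (((1 + u : ℝ)⁻¹ : ℝ) : ℂ) ^ w = (((1 + u : ℝ)) : ℂ) ^ (-w) := by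
    intro w
    rw [Complex.ofReal_inv, Complex.inv_cpow _ _ harg, ← Complex.cpow_neg]
  have hsub : (1 : ℂ) - ((u / (1 + u) : ℝ) : ℂ) = (((1 + u : ℝ)⁻¹ : ℝ) : ℂ) := by
    have : (1 : ℝ) - u / (1 + u) = (1 + u)⁻¹ := by field_simp; ring
    push_cast [← this]
    ring
  have hmul : (((u / (1 + u) : ℝ)) : ℂ) ^ (z - 1)
      = (u : ℂ) ^ (z - 1) * (((1 + u : ℝ)⁻¹ : ℝ) : ℂ) ^ (z - 1) := by
    rw [div_eq_mul_inv, Complex.ofReal_mul,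
      Complex.mul_cpow_ofReal_nonneg hu'.le (by positivity)]
  rw [hsub, hmul, hinv, hinv]
  have h2 : ((1 + u : ℝ) : ℂ) ^ (-(z - 1)) * ((1 + u : ℝ) : ℂ) ^ (-(-z))
      = ((1 + u : ℝ) : ℂ) ^ (1 : ℂ) := by
    rw [← Complex.cpow_add _ _ (by push_cast at h1u' ⊢; exact h1u')]
    ring_nf
  have habs : |((1 + u) ^ 2)⁻¹| = ((1 + u) ^ 2)⁻¹ := abs_of_pos (by positivity)
  have hne : ((1 + u : ℝ) : ℂ) ≠ 0 := Complex.ofReal_ne_zero.mpr h1u.ne'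
  have h4 : (u : ℂ) ^ (z - 1) * ((1 + u : ℝ) : ℂ) ^ (-(z - 1)) * ((1 + u : ℝ) : ℂ) ^ (-(-z))
      = (u : ℂ) ^ (z - 1) * ((1 + u : ℝ) : ℂ) := by
    rw [mul_assoc, ← Complex.cpow_add _ _ hne, show -(z - 1) + -(-z) = 1 by ring,
      Complex.cpow_one]
  rw [habs, h4, Complex.real_smul]
  push_cast
  rw [mul_comm, mul_assoc]
  congr 1
  field_simp

lemma mellin_aux (z : ℂ) (hz0 : 0 < z.re) (hz1 : z.re < 1) :
    IntegrableOn (fun t : ℝ => (t : ℂ) ^ (z - 1) * ((1 : ℂ) + (t : ℂ))⁻¹) (Ioi 0) ∧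
      ∫ t in Ioi (0:ℝ), (t : ℂ) ^ (z - 1) * ((1 : ℂ) + (t : ℂ))⁻¹ =
        ↑π / Complex.sin (↑π * z) := by
  have h1z : 0 < (1 - z).re := by simp [Complex.sub_re]; linarith
  set g : ℝ → ℂ := fun x => (x : ℂ) ^ (z - 1) * ((1 : ℂ) - (x : ℂ)) ^ (-z) with hg
  have hexp : (1 : ℂ) - z - 1 = -z := by ring
  have hbeta := Complex.betaIntegral_convergent hz0 h1z
  rw [hexp] at hbeta
  have hg_int : IntegrableOn g (Ioo 0 1) := by
    rw [intervalIntegrable_iff_integrableOn_Ioo_of_le zero_le_one] at hbeta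
    exact hbeta
  have key := integral_image_eq_integral_abs_deriv_smul measurableSet_Ioi phi_deriv phi_inj g
  rw [phi_image] at key
  have keyInt :=
    integrableOn_image_iff_integrableOn_abs_deriv_smul measurableSet_Ioi phi_deriv phi_inj g
  rw [phi_image] at keyInt
  have h5 := keyInt.mp hg_int
  constructor
  · exact (h5.congr_fun (fun u hu => integrand_eq z u hu) measurableSet_Ioi)
  · have hint : ∫ u in Ioi (0:ℝ), |((1 + u) ^ 2)⁻¹| • g (u / (1 + u))
        = ∫ t in Ioi (0:ℝ), (t : ℂ) ^ (z - 1) * ((1 : ℂ) + (t : ℂ))⁻¹ :=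
      setIntegral_congr_fun measurableSet_Ioi (fun u hu => integrand_eq z u hu)
    rw [← hint, ← key]
    have hL : ∫ x in Ioo (0:ℝ) 1, g x = Complex.betaIntegral z (1 - z) := by
      rw [Complex.betaIntegral, intervalIntegral.integral_of_le zero_le_one,
        integral_Ioc_eq_integral_Ioo, hexp]
    rw [hL]
    have h := Complex.Gamma_mul_Gamma_eq_betaIntegral hz0 h1z
    rw [show z + (1 - z) = 1 by ring, Complex.Gamma_one, one_mul] at h
    rw [← h, Complex.Gamma_mul_Gamma_one_sub]

/-- nonvanishing of sin on the line -/
lemma sin_line_ne_zero {s : ℝ} (hs0 : 0 < s) (hs1 : s < 1) (b : ℝ) :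
    Complex.sin (↑(π * s) + ↑b * Complex.I) ≠ 0 := by
  intro h
  have h1 := norm_sin_lower (π * s) b
  rw [h, norm_zero, abs_of_pos (sin_pi_s_pos hs0 hs1)] at h1
  nlinarith [sin_pi_s_pos hs0 hs1, Real.cosh_pos b]

theorem main (s x : ℝ) (hs0 : 0 < s) (hs1 : s < 1) (hx : 0 < x) :
    Integrable (fun t : ℝ =>
        (x : ℂ) ^ (Complex.I * (t : ℂ)) /
          Complex.sin ((Real.pi : ℂ) * ((s : ℂ) - Complex.I * (t : ℂ)))) ∧
      ∫ t : ℝ, (x : ℂ) ^ (Complex.I * (t : ℂ)) /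
          Complex.sin ((Real.pi : ℂ) * ((s : ℂ) - Complex.I * (t : ℂ))) =
        2 * (x : ℂ) ^ (s : ℂ) / (1 + (x : ℂ)) := by
  have hx0 : (x : ℂ) ≠ 0 := Complex.ofReal_ne_zero.mpr hx.ne'
  have hsinpos := sin_pi_s_pos hs0 hs1
  -- rewriting of the complex argument
  have harg : ∀ t : ℝ, (↑Real.pi : ℂ) * ((s : ℂ) - Complex.I * (t : ℂ))
      = ↑(π * s) + ↑(-(π * t)) * Complex.I := by
    intro t; push_cast; ring
  -- norm of the integrand
  have hnorm : ∀ t : ℝ, ‖(x : ℂ) ^ (Complex.I * (t : ℂ)) /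
      Complex.sin ((Real.pi : ℂ) * ((s : ℂ) - Complex.I * (t : ℂ)))‖
      ≤ 2 / Real.sin (π * s) * Real.exp (-(π * |t|)) := by
    intro t
    rw [norm_div, harg t]
    have hx1 : ‖(x : ℂ) ^ (Complex.I * (t : ℂ))‖ = 1 := by
      rw [Complex.norm_cpow_eq_rpow_re_of_pos hx]
      simp
    rw [hx1, one_div]
    have := norm_inv_sin_le hs0 hs1 (-(π * t))
    rwa [norm_inv, abs_neg, abs_mul, abs_of_pos Real.pi_pos] at this
  -- integrability of the target
  have hInt : Integrable (fun t : ℝ =>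
      (x : ℂ) ^ (Complex.I * (t : ℂ)) /
        Complex.sin ((Real.pi : ℂ) * ((s : ℂ) - Complex.I * (t : ℂ)))) := by
    refine Integrable.mono' (integrable_exp_neg_pi_abs.const_mul (2 / Real.sin (π * s)))
      ?_ (Filter.Eventually.of_forall hnorm)
    apply Continuous.aestronglyMeasurable
    apply Continuous.div
    · apply Continuous.const_cpow (by fun_prop) (Or.inl hx0)
    · fun_prop
    · intro t
      rw [harg t]
      exact sin_line_ne_zero hs0 hs1 _
  refine ⟨hInt, ?_⟩
  -- Mellin inversion setup
  set f : ℝ → ℂ := fun t => ((1 : ℂ) + (t : ℂ))⁻¹ with hf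
  have hmel : ∀ z : ℂ, 0 < z.re → z.re < 1 → mellin f z = ↑π / Complex.sin (↑π * z) := by
    intro z h1 h2
    rw [mellin]
    simp_rw [smul_eq_mul]
    exact (mellin_aux z h1 h2).2
  have hre : ∀ y : ℝ, ((s : ℂ) + (y : ℂ) * Complex.I).re = s := by intro y; simp
  have hconv : MellinConvergent f (s : ℂ) := by
    have := (mellin_aux (s : ℂ) (by simpa using hs0) (by simpa using hs1)).1
    simpa [MellinConvergent, smul_eq_mul] using this
  have heq : ∀ y : ℝ, mellin f ((s : ℂ) + (y : ℂ) * Complex.I)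
      = ↑π / Complex.sin (↑π * ((s : ℂ) + (y : ℂ) * Complex.I)) := fun y =>
    hmel _ (by rw [hre]; exact hs0) (by rw [hre]; exact hs1)
  have hvert : Complex.VerticalIntegrable (mellin f) s := by
    rw [Complex.VerticalIntegrable]
    simp_rw [heq]
    have harg2 : ∀ y : ℝ, (↑π : ℂ) * ((s : ℂ) + (y : ℂ) * Complex.I)
        = ↑(π * s) + ↑(π * y) * Complex.I := by intro y; push_cast; ring
    refine Integrable.mono' ((integrable_exp_neg_pi_abs.const_mul
      (π * (2 / Real.sin (π * s))))) ?_ ?_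
    · apply Continuous.aestronglyMeasurable
      apply Continuous.div continuous_const (by fun_prop)
      intro y
      rw [harg2 y]
      exact sin_line_ne_zero hs0 hs1 _
    · refine Filter.Eventually.of_forall fun y => ?_
      rw [norm_div, harg2 y, Complex.norm_real, Real.norm_eq_abs,
        abs_of_pos Real.pi_pos, div_eq_mul_inv, ← norm_inv]
      have h := norm_inv_sin_le hs0 hs1 (π * y)
      rw [abs_mul, abs_of_pos Real.pi_pos] at h
      calc π * ‖(Complex.sin (↑(π * s) + ↑(π * y) * Complex.I))⁻¹‖
          ≤ π * (2 / Real.sin (π * s) * Real.exp (-(π * |y|))) :=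
            mul_le_mul_of_nonneg_left h Real.pi_pos.le
        _ = π * (2 / Real.sin (π * s)) * Real.exp (-(π * |y|)) := by ring
  have hcont : ContinuousAt f x := by
    apply ContinuousAt.inv₀ (by fun_prop)
    have : ((1 + x : ℝ) : ℂ) ≠ 0 := Complex.ofReal_ne_zero.mpr (by positivity)
    push_cast at this
    exact this
  have hinv := mellinInv_mellin_eq s f hx hconv hvert hcont
  rw [mellinInv] at hinv
  simp_rw [heq, smul_eq_mul] at hinv
  have hflip : (∫ y : ℝ, (x:ℂ) ^ (-((s:ℂ) + (y:ℂ) * Complex.I)) *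
        (↑π / Complex.sin (↑π * ((s:ℂ) + (y:ℂ) * Complex.I))))
      = ∫ y : ℝ, (x:ℂ) ^ (-((s:ℂ) + ((-y : ℝ):ℂ) * Complex.I)) *
        (↑π / Complex.sin (↑π * ((s:ℂ) + ((-y : ℝ):ℂ) * Complex.I))) :=
    (integral_neg_eq_self (fun y : ℝ => (x:ℂ) ^ (-((s:ℂ) + (y:ℂ) * Complex.I)) *
      (↑π / Complex.sin (↑π * ((s:ℂ) + (y:ℂ) * Complex.I)))) volume).symm
  have hptw : ∀ y : ℝ, (x:ℂ) ^ (-((s:ℂ) + ((-y : ℝ):ℂ) * Complex.I)) *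
        (↑π / Complex.sin (↑π * ((s:ℂ) + ((-y : ℝ):ℂ) * Complex.I)))
      = (x:ℂ) ^ (-(s:ℂ)) * ↑π *
        ((x:ℂ) ^ (Complex.I * (y:ℂ)) / Complex.sin (↑π * ((s:ℂ) - Complex.I * (y:ℂ)))) := by
    intro y
    have e1 : -((s:ℂ) + ((-y : ℝ):ℂ) * Complex.I) = -(s:ℂ) + Complex.I * (y:ℂ) := by
      push_cast; ring
    have e2 : ((s:ℂ) + ((-y : ℝ):ℂ) * Complex.I) = (s:ℂ) - Complex.I * (y:ℂ) := by
      push_cast; ring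
    rw [e1, e2, Complex.cpow_add _ _ hx0]
    ring
  have hJ : (∫ y : ℝ, (x:ℂ) ^ (-((s:ℂ) + (y:ℂ) * Complex.I)) *
        (↑π / Complex.sin (↑π * ((s:ℂ) + (y:ℂ) * Complex.I))))
      = (x:ℂ) ^ (-(s:ℂ)) * ↑π *
        ∫ t : ℝ, (x:ℂ) ^ (Complex.I * (t:ℂ)) /
          Complex.sin (↑π * ((s:ℂ) - Complex.I * (t:ℂ))) := by
    rw [hflip]
    simp_rw [hptw]
    rw [integral_const_mul]
  rw [hJ] at hinv
  have hxs : (x:ℂ) ^ (s:ℂ) ≠ 0 := by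
    rw [Complex.cpow_def_of_ne_zero hx0]; exact Complex.exp_ne_zero _
  have hxneg : (x:ℂ) ^ (-(s:ℂ)) = ((x:ℂ) ^ (s:ℂ))⁻¹ := Complex.cpow_neg _ _
  have h1x : (1:ℂ) + ↑x ≠ 0 := by
    have : ((1 + x : ℝ) : ℂ) ≠ 0 := Complex.ofReal_ne_zero.mpr (by positivity)
    push_cast at this; exact this
  have hπ : (↑π : ℂ) ≠ 0 := Complex.ofReal_ne_zero.mpr Real.pi_ne_zero
  rw [Complex.real_smul, hxneg] at hinv
  push_cast at hinv
  simp only [hf] at hinv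
  field_simp at hinv
  rw [eq_div_iff h1x]
  apply mul_left_cancel₀ hπ
  linear_combination (↑π : ℂ) * hinv

end CpowDivSinAux

/-- For `0 < s < 1` and `x > 0`, the function `t ↦ x^{it} / sin (π (s - it))` is integrable
on `ℝ` and its integral equals `2 x^s / (1 + x)`. -/
theorem integral_cpow_div_sin (s x : ℝ) (hs0 : 0 < s) (hs1 : s < 1) (hx : 0 < x) :
    Integrable (fun t : ℝ =>
        (x : ℂ) ^ (Complex.I * (t : ℂ)) /
          Complex.sin ((Real.pi : ℂ) * ((s : ℂ) - Complex.I * (t : ℂ)))) ∧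
      ∫ t : ℝ, (x : ℂ) ^ (Complex.I * (t : ℂ)) /
          Complex.sin ((Real.pi : ℂ) * ((s : ℂ) - Complex.I * (t : ℂ))) =
        2 * (x : ℂ) ^ (s : ℂ) / (1 + (x : ℂ)) :=
  CpowDivSinAux.main s x hs0 hs1 hx
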